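/- Let O be a complete discrete valuation ring with uniformizer π, and [π](T) ∈ O[[T]] a Lubin–Tate series for π (so [π](T) ≡ πT mod deg 2 and [π](T) ≡ T^q mod π, q the residue cardinality). Write [π^{n+1}](T) for the (n+1)-fold composite and h(T) := [π^{n+1}](T)/[π^n](T) (which lies in O[T] as [π^n](T) divides [π^{n+1}](T)). Then h(T) ≡ π·h₁(T) mod [π^n](T) for some polynomial h₁ ∈ O[T]; equivalently, the image of h in O[T]/([π^n](T)) is divisible by π. -/

import Mathlib

/-- Lubin–Tate divisibility: let `O` be a (complete) discrete valuation ring with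
uniformizer `π` and residue cardinality `q`, and let `f = [π](T)` be a Lubin–Tate
(polynomial) series for `π`, so `f ≡ πT mod deg 2` and `f ≡ T^q mod π`.  Let
`Fn m = [π^m](T)` be the `m`-fold composite (`Fn 0 = T`, `Fn (m+1) = f ∘ Fn m`), and let
`h = [π^{n+1}]/[π^n]`, i.e. `Fn (n+1) = Fn n · h`.  Then `h ≡ π·h₁ mod [π^n](T)` for some
`h₁ ∈ O[T]`: the image of `h` in `O[T]/([π^n](T))` is divisible by `π`. -/
theorem stmt12 (O : Type*) [CommRing O] [IsDomain O] [IsDiscreteValuationRing O]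
    (π : O) (hπ : Irreducible π) (q : ℕ) (hq : 2 ≤ q)
    (f : Polynomial O) (hf0 : f.coeff 0 = 0) (hf1 : f.coeff 1 = π)
    (hfq : ∀ i : ℕ, π ∣ (f - Polynomial.X ^ q).coeff i)
    (Fn : ℕ → Polynomial O) (hF0 : Fn 0 = Polynomial.X)
    (hFs : ∀ m : ℕ, Fn (m + 1) = f.comp (Fn m))
    (n : ℕ) (h : Polynomial O) (hh : Fn (n + 1) = Fn n * h) :
    ∃ h₁ : Polynomial O, h - Polynomial.C π * h₁ ∈ Ideal.span {Fn n} := by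
  have hprime : Prime π := hπ.prime
  obtain ⟨g, hg⟩ : Polynomial.C π ∣ (f - Polynomial.X ^ q) :=
    (Polynomial.C_dvd_iff_dvd_coeff _ _).2 hfq
  have hf : f = Polynomial.X ^ q + Polynomial.C π * g := by
    rw [← hg]; ring
  -- key algebraic identity
  have hq1 : q - 1 + 1 = q := Nat.sub_add_cancel (by omega)
  have key : Fn n * (h - Fn n ^ (q - 1)) = Polynomial.C π * g.comp (Fn n) := by
    have e1 : Fn n * h = (Polynomial.X ^ q + Polynomial.C π * g).comp (Fn n) := by
      rw [← hf, ← hFs, hh]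
    rw [Polynomial.add_comp, Polynomial.mul_comp, Polynomial.pow_comp,
      Polynomial.X_comp, Polynomial.C_comp] at e1
    have e2 : Fn n ^ q = Fn n * Fn n ^ (q - 1) := by
      rw [← pow_succ', hq1]
    rw [mul_sub, e1, e2]; ring
  -- reduce mod π
  haveI hIP : (Ideal.span {π}).IsPrime :=
    (Ideal.span_singleton_prime hprime.ne_zero).2 hprime
  set mk := Ideal.Quotient.mk (Ideal.span {π}) with hmk
  have hmkπ : mk π = 0 := by
    rw [Ideal.Quotient.eq_zero_iff_mem]
    exact Ideal.mem_span_singleton_self π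
  have hFnmap : ∀ m : ℕ, (Fn m).map mk = Polynomial.X ^ (q ^ m) := by
    intro m
    induction m with
    | zero => simp [hF0]
    | succ m ih =>
      rw [hFs, Polynomial.map_comp, hf]
      simp only [Polynomial.map_add, Polynomial.map_pow, Polynomial.map_X,
        Polynomial.map_mul, Polynomial.map_C, hmkπ, Polynomial.C_0, zero_mul, add_zero]
      rw [Polynomial.X_pow_comp, ih, ← pow_mul, pow_succ]
  have hmap0 : (h - Fn n ^ (q - 1)).map mk = 0 := by
    have := congrArg (Polynomial.map mk) key
    rw [Polynomial.map_mul, Polynomial.map_mul, Polynomial.map_C, hmkπ,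
      Polynomial.C_0, zero_mul, hFnmap] at this
    have hX : (Polynomial.X : Polynomial (O ⧸ Ideal.span {π})) ^ (q ^ n) ≠ 0 :=
      pow_ne_zero _ Polynomial.X_ne_zero
    exact (mul_eq_zero.1 this).resolve_left hX
  obtain ⟨h₁, hA⟩ : Polynomial.C π ∣ (h - Fn n ^ (q - 1)) := by
    rw [Polynomial.C_dvd_iff_dvd_coeff]
    intro i
    have : mk ((h - Fn n ^ (q - 1)).coeff i) = 0 := by
      rw [← Polynomial.coeff_map, hmap0, Polynomial.coeff_zero]
    rw [Ideal.Quotient.eq_zero_iff_mem, Ideal.mem_span_singleton] at this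
    exact this
  refine ⟨h₁, ?_⟩
  have : h - Polynomial.C π * h₁ = Fn n ^ (q - 1) := by
    rw [← hA]; ring
  rw [this, Ideal.mem_span_singleton]
  exact dvd_pow_self (Fn n) (by omega)
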